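/- α-sets form a partition: Let x, y ∈ X, let σ, δ ∈ S^G_{<∞} with rng σ = rng δ = c, and let α ≥ 1 be a countable ordinal. Then: (a) if y ∈ B_α(x,σ) then B_α(y, id_c) = B_α(x,σ), where id_c ∈ S^G_{<∞} is the identity map on c; (b) either B_α(x,σ) = B_α(y,δ) or B_α(x,σ) ∩ B_α(y,δ) = ∅. -/

import Mathlib

open Set Pointwise

noncomputable section

/-- `S_∞`, the group of all permutations of `ℕ`. -/
abbrev Sinf : Type := Equiv.Perm ℕ

/-- The topology of pointwise convergence on `S_∞`. -/
instance SinfTopology : TopologicalSpace Sinf :=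
  TopologicalSpace.induced (fun g : Sinf => (g : ℕ → ℕ)) Pi.topologicalSpace

/-- The graph of the restriction of a permutation `g` to a finite set `d`. -/
def restr (g : Sinf) (d : Finset ℕ) : Set (ℕ × ℕ) := {p | p.1 ∈ d ∧ g p.1 = p.2}

/-- The domain of a partial map coded by its graph. -/
def pdom (σ : Set (ℕ × ℕ)) : Set ℕ := Prod.fst '' σ

/-- The range of a partial map coded by its graph. -/
def prng (σ : Set (ℕ × ℕ)) : Set ℕ := Prod.snd '' σ

/-- `S^G_{<∞}`: graphs of restrictions of elements of `G` to finite subsets of `ℕ`. -/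
def SGfin (G : Subgroup Sinf) : Set (Set (ℕ × ℕ)) :=
  {σ | ∃ g ∈ G, ∃ d : Finset ℕ, σ = restr g d}

/-- `V^G_σ`: the elements of `G` extending the partial bijection `σ`. -/
def Vb (G : Subgroup Sinf) (σ : Set (ℕ × ℕ)) : Set G :=
  {g : G | ∀ p ∈ σ, (g : Sinf) p.1 = p.2}

/-- `V^G_c`: the pointwise stabilizer of `c ⊆ ℕ` in `G`. -/
def Vc (G : Subgroup Sinf) (c : Set ℕ) : Set G :=
  {g : G | ∀ k ∈ c, (g : Sinf) k = k}

/-- The identity partial bijection on `c`. -/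
def idb (c : Set ℕ) : Set (ℕ × ℕ) := {p | p.1 ∈ c ∧ p.2 = p.1}

/-- The composition `σ ∘ f`, restricted to `f⁻¹[dom σ]`. -/
def compR (σ : Set (ℕ × ℕ)) (f : Sinf) : Set (ℕ × ℕ) := {p | (f p.1, p.2) ∈ σ}

/-- The composition `f ∘ σ`. -/
def compL (f : Sinf) (σ : Set (ℕ × ℕ)) : Set (ℕ × ℕ) := {p | (p.1, f⁻¹ p.2) ∈ σ}

/-- The Borel classes `Σ⁰_α(X)`: `Σ⁰_1(X)` consists of the open sets, and for `α > 1`,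
`Σ⁰_α(X)` consists of countable unions of sets whose complements lie in
`⋃_{1 ≤ β < α} Σ⁰_β(X)` (i.e. of sets from `⋃_{1 ≤ β < α} Π⁰_β(X)`). -/
def SigmaB (X : Type*) [TopologicalSpace X] (α : Ordinal.{0}) : Set (Set X) :=
  if α ≤ 1 then {s | IsOpen s}
  else {s | ∃ f : ℕ → Set X,
      (∀ n, ∃ β : {γ : Ordinal.{0} // γ < α}, 1 ≤ β.1 ∧ (f n)ᶜ ∈ SigmaB X β.1) ∧
      s = ⋃ n, f n}
termination_by α
decreasing_by exact β.2

/-- The Borel classes `Π⁰_α(X)`: complements of sets in `Σ⁰_α(X)`. -/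
def PiB (X : Type*) [TopologicalSpace X] (α : Ordinal.{0}) : Set (Set X) :=
  {s | sᶜ ∈ SigmaB X α}

section Action

variable (G : Subgroup Sinf) {X : Type*} [TopologicalSpace X] [MulAction G X]

/-- The image `S • x` of a point under a set of group elements. -/
def setOrb (S : Set G) (x : X) : Set X := (fun g : G => g • x) '' S

/-- The image `S • B` of a set under a set of group elements. -/
def setSmul (S : Set G) (B : Set X) : Set X := ⋃ g ∈ S, g • B

/-- The `1`-sets `B₁(x, σ)`. -/
def BsetOne (A : ℕ → Set X) (σ : Set (ℕ × ℕ)) (x : X) : Set X :=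
  (⋂ l, ⋂ (_ : (setOrb G (Vb G σ) x ∩ A l).Nonempty), setSmul G (Vc G (prng σ)) (A l)) ∩
    (⋂ l, ⋂ (_ : setOrb G (Vb G σ) x ∩ A l = ∅), (setSmul G (Vc G (prng σ)) (A l))ᶜ)

/-- The successor step of the recursion defining the `α`-sets. -/
def BsetSucc (prev : Set (ℕ × ℕ) → X → Set X) (σ : Set (ℕ × ℕ)) (x : X) : Set X :=
  (⋂ b : Finset ℕ, ⋂ (_ : pdom σ ⊆ ↑b),
      ⋃ σ' ∈ SGfin G, ⋃ (_ : σ ⊆ σ') (_ : pdom σ' = ↑b), prev σ' x) ∩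
    (⋂ a : Finset ℕ, ⋂ (_ : prng σ ⊆ ↑a),
      ⋃ σ' ∈ SGfin G, ⋃ (_ : σ ⊆ σ') (_ : prng σ' = ↑a), prev σ' x)

/-- The `α`-sets `B_α(x, σ)`, for `α ≥ 1` (the value at `α = 0` is junk). -/
def Bset (A : ℕ → Set X) (α : Ordinal.{0}) : Set (ℕ × ℕ) → X → Set X :=
  @Ordinal.limitRecOn (fun _ => Set (ℕ × ℕ) → X → Set X) α
    (fun _ _ => univ)
    (fun o ih => if o = 0 then BsetOne G A else BsetSucc G ih)
    (fun o _ ih σ x => ⋂ β : Ordinal.{0}, ⋂ (hβ : β < o), ⋂ (_ : 1 ≤ β), ih β hβ σ x)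

/-- The family `𝓑^x_{<α}` consisting of the basic open sets together with all
`β`-sets of `x` for `1 ≤ β < α`. -/
def BltFam (A : ℕ → Set X) (x : X) (α : Ordinal.{0}) : Set (Set X) :=
  {B | (∃ l, B = A l) ∨
    ∃ β : Ordinal.{0}, 1 ≤ β ∧ β < α ∧ ∃ σ ∈ SGfin G, B = Bset G A β σ x}

/-- `γ^G_*(x)`: the least countable ordinal `γ` such that for all `σ, δ ∈ S^G_{<∞}`
with equal ranges, if `B_α(x,σ) ≠ B_α(x,δ)` for some countable ordinal `α ≥ 1`,
then already `B_γ(x,σ) ≠ B_γ(x,δ)`. -/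
def gammaStar (A : ℕ → Set X) (x : X) : Ordinal :=
  sInf {γ : Ordinal.{0} | γ.card ≤ Cardinal.aleph0 ∧
    ∀ σ ∈ SGfin G, ∀ δ ∈ SGfin G, prng σ = prng δ →
      (∃ α : Ordinal.{0}, 1 ≤ α ∧ α.card ≤ Cardinal.aleph0 ∧
        Bset G A α σ x ≠ Bset G A α δ x) →
      Bset G A γ σ x ≠ Bset G A γ δ x}

end Action

/-- The topology on a subset `S ⊆ X` generated by the traces on `S` of the members
of the family `F`. -/
def traceTop {X : Type*} (S : Set X) (F : Set (Set X)) : TopologicalSpace S :=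
  TopologicalSpace.generateFrom {u : Set S | ∃ B ∈ F, u = Subtype.val ⁻¹' B}

/-- The space of closed subsets of `Y`. -/
def EffrosSpace (Y : Type*) [TopologicalSpace Y] := {K : Set Y // IsClosed K}

/-- The Effros Borel structure on the space of closed subsets of `Y`. -/
def effrosSigma (Y : Type*) [TopologicalSpace Y] : MeasurableSpace (EffrosSpace Y) :=
  MeasurableSpace.generateFrom
    {S | ∃ U : Set Y, IsOpen U ∧ S = {K : EffrosSpace Y | (K.1 ∩ U).Nonempty}}


section AlphaAux

/-! ### Auxiliary material for `alphaSet_partition` -/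

/-- The inverse of a partial bijection coded by its graph. -/
def pinv (σ : Set (ℕ × ℕ)) : Set (ℕ × ℕ) := {p | (p.2, p.1) ∈ σ}

/-- The composition `τ ∘ σ` of partial maps coded by graphs. -/
def pcomp (τ σ : Set (ℕ × ℕ)) : Set (ℕ × ℕ) := {p | ∃ j, (p.1, j) ∈ σ ∧ (j, p.2) ∈ τ}

lemma mem_pdom {σ : Set (ℕ × ℕ)} {k : ℕ} : k ∈ pdom σ ↔ ∃ m, (k, m) ∈ σ := by
  constructor
  · rintro ⟨⟨a, b⟩, h, rfl⟩; exact ⟨b, h⟩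
  · rintro ⟨m, h⟩; exact ⟨(k, m), h, rfl⟩

lemma mem_prng {σ : Set (ℕ × ℕ)} {m : ℕ} : m ∈ prng σ ↔ ∃ k, (k, m) ∈ σ := by
  constructor
  · rintro ⟨⟨a, b⟩, h, rfl⟩; exact ⟨a, h⟩
  · rintro ⟨k, h⟩; exact ⟨(k, m), h, rfl⟩

lemma pdom_pinv (σ : Set (ℕ × ℕ)) : pdom (pinv σ) = prng σ := by
  ext k; simp [mem_pdom, mem_prng, pinv]

lemma prng_pinv (σ : Set (ℕ × ℕ)) : prng (pinv σ) = pdom σ := by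
  ext k; simp [mem_pdom, mem_prng, pinv]

lemma pinv_mono {σ σ' : Set (ℕ × ℕ)} (h : σ ⊆ σ') : pinv σ ⊆ pinv σ' :=
  fun _ hp => h hp

lemma pcomp_mono {σ σ' τ τ' : Set (ℕ × ℕ)} (hσ : σ ⊆ σ') (hτ : τ ⊆ τ') :
    pcomp τ σ ⊆ pcomp τ' σ' := by
  rintro p ⟨j, h1, h2⟩; exact ⟨j, hσ h1, hτ h2⟩

lemma prng_mono {σ σ' : Set (ℕ × ℕ)} (h : σ ⊆ σ') : prng σ ⊆ prng σ' :=
  fun _ ⟨p, hp, e⟩ => ⟨p, h hp, e⟩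

lemma pdom_restr (g : Sinf) (d : Finset ℕ) : pdom (restr g d) = ↑d := by
  ext k; simp [mem_pdom, restr]

lemma prng_restr (g : Sinf) (d : Finset ℕ) : prng (restr g d) = ↑(d.image g) := by
  ext m
  simp only [mem_prng, restr, Set.mem_setOf_eq, Finset.coe_image, Set.mem_image,
    Finset.mem_coe]

lemma pinv_restr (g : Sinf) (d : Finset ℕ) :
    pinv (restr g d) = restr g⁻¹ (d.image g) := by
  ext ⟨n, m⟩
  simp only [pinv, restr, Set.mem_setOf_eq, Finset.mem_image]
  constructor
  · rintro ⟨h, rfl⟩; exact ⟨⟨m, h, rfl⟩, by simp⟩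
  · rintro ⟨⟨m', h, rfl⟩, rfl⟩; simpa using h

lemma pcomp_restr (g h : Sinf) (d₁ d₂ : Finset ℕ) :
    pcomp (restr h d₂) (restr g d₁) = restr (h * g) (d₁.filter (fun k => g k ∈ d₂)) := by
  ext ⟨k, m⟩
  simp only [pcomp, restr, Set.mem_setOf_eq, Finset.mem_filter, Equiv.Perm.mul_apply]
  constructor
  · rintro ⟨j, ⟨hk, rfl⟩, hj, rfl⟩; exact ⟨⟨hk, hj⟩, rfl⟩
  · rintro ⟨⟨hk, hj⟩, rfl⟩; exact ⟨g k, ⟨hk, rfl⟩, hj, rfl⟩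

variable {G : Subgroup Sinf}

lemma pinv_SGfin {σ : Set (ℕ × ℕ)} (h : σ ∈ SGfin G) : pinv σ ∈ SGfin G := by
  obtain ⟨g, hg, d, rfl⟩ := h
  exact ⟨g⁻¹, inv_mem hg, d.image g, pinv_restr g d⟩

lemma pcomp_SGfin {σ τ : Set (ℕ × ℕ)} (hσ : σ ∈ SGfin G) (hτ : τ ∈ SGfin G) :
    pcomp τ σ ∈ SGfin G := by
  obtain ⟨g, hg, d₁, rfl⟩ := hσ
  obtain ⟨h, hh, d₂, rfl⟩ := hτ
  exact ⟨h * g, mul_mem hh hg, _, pcomp_restr g h d₁ d₂⟩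

lemma SGfin.singleValued {σ : Set (ℕ × ℕ)} (h : σ ∈ SGfin G) {k m m' : ℕ}
    (h1 : (k, m) ∈ σ) (h2 : (k, m') ∈ σ) : m = m' := by
  obtain ⟨g, hg, d, rfl⟩ := h
  exact h1.2.symm.trans h2.2

lemma SGfin.finrng {σ : Set (ℕ × ℕ)} (h : σ ∈ SGfin G) :
    ∃ a : Finset ℕ, prng σ = ↑a := by
  obtain ⟨g, hg, d, rfl⟩ := h
  exact ⟨d.image g, prng_restr g d⟩

lemma idb_eq_restr (b : Finset ℕ) : idb (↑b : Set ℕ) = restr 1 b := by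
  ext ⟨k, m⟩
  simp only [idb, restr, Set.mem_setOf_eq, Finset.mem_coe, Equiv.Perm.one_apply]
  tauto

lemma idb_SGfin (b : Finset ℕ) : idb (↑b : Set ℕ) ∈ SGfin G :=
  ⟨1, one_mem _, b, idb_eq_restr b⟩

lemma pdom_idb (c : Set ℕ) : pdom (idb c) = c := by
  ext k; simp [mem_pdom, idb]

lemma prng_idb (c : Set ℕ) : prng (idb c) = c := by
  ext k
  simp only [mem_prng, idb, Set.mem_setOf_eq]
  constructor
  · rintro ⟨j, hj, rfl⟩; exact hj
  · intro hk; exact ⟨k, hk, rfl⟩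

lemma pcomp_idb_left {σ : Set (ℕ × ℕ)} {c : Set ℕ} (h : prng σ ⊆ c) :
    pcomp (idb c) σ = σ := by
  ext ⟨k, m⟩
  simp only [pcomp, idb, Set.mem_setOf_eq]
  constructor
  · rintro ⟨j, hj, hjc, rfl⟩; exact hj
  · intro hk; exact ⟨m, hk, h (mem_prng.mpr ⟨k, hk⟩), rfl⟩

lemma pcomp_pinv_self {σ : Set (ℕ × ℕ)} (hσ : σ ∈ SGfin G) :
    pcomp σ (pinv σ) = idb (prng σ) := by
  ext ⟨m, m'⟩
  simp only [pcomp, pinv, idb, Set.mem_setOf_eq]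
  constructor
  · rintro ⟨j, h1, h2⟩
    exact ⟨mem_prng.mpr ⟨j, h1⟩, (SGfin.singleValued hσ h2 h1)⟩
  · rintro ⟨hm, rfl⟩
    obtain ⟨j, hj⟩ := mem_prng.mp hm
    exact ⟨j, hj, hj⟩

lemma pdom_pcomp {σ τ : Set (ℕ × ℕ)} (h : prng σ = pdom τ) :
    pdom (pcomp τ σ) = pdom σ := by
  ext k
  simp only [mem_pdom, pcomp, Set.mem_setOf_eq]
  constructor
  · rintro ⟨m, j, h1, h2⟩; exact ⟨j, h1⟩
  · rintro ⟨j, hj⟩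
    have : j ∈ pdom τ := h ▸ mem_prng.mpr ⟨k, hj⟩
    obtain ⟨m, hm⟩ := mem_pdom.mp this
    exact ⟨m, j, hj, hm⟩

lemma prng_pcomp {σ τ : Set (ℕ × ℕ)} (h : prng σ = pdom τ) :
    prng (pcomp τ σ) = prng τ := by
  ext m
  simp only [mem_prng, pcomp, Set.mem_setOf_eq]
  constructor
  · rintro ⟨k, j, h1, h2⟩; exact ⟨j, h2⟩
  · rintro ⟨j, hj⟩
    have : j ∈ prng σ := h.symm ▸ mem_pdom.mpr ⟨m, hj⟩
    obtain ⟨k, hk⟩ := mem_prng.mp this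
    exact ⟨k, j, hk, hj⟩

lemma Vb_nonempty {σ : Set (ℕ × ℕ)} (hσ : σ ∈ SGfin G) : (Vb G σ).Nonempty := by
  obtain ⟨g, hg, d, rfl⟩ := hσ
  exact ⟨⟨g, hg⟩, fun p hp => hp.2⟩

lemma one_mem_Vc (c : Set ℕ) : (1 : G) ∈ Vc G c := fun k _ => rfl

lemma perm_inv_apply {g : Sinf} {k m : ℕ} (h : g m = k) : g⁻¹ k = m := by
  rw [← h]; simp

end AlphaAux


section AlphaAux2

variable {G : Subgroup Sinf} {X : Type*} [TopologicalSpace X] [MulAction G X]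

lemma mem_setSmul {S : Set G} {B : Set X} {y : X} :
    y ∈ setSmul G S B ↔ ∃ g ∈ S, g⁻¹ • y ∈ B := by
  simp only [setSmul, Set.mem_iUnion, exists_prop, Set.mem_smul_set_iff_inv_smul_mem]

lemma setOrb_inter_nonempty {S : Set G} {B : Set X} {x : X} :
    (setOrb G S x ∩ B).Nonempty ↔ ∃ g ∈ S, g • x ∈ B := by
  constructor
  · rintro ⟨z, ⟨g, hg, rfl⟩, hz⟩; exact ⟨g, hg, hz⟩
  · rintro ⟨g, hg, h⟩; exact ⟨g • x, ⟨g, hg, rfl⟩, h⟩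

lemma mem_BsetOne {A : ℕ → Set X} {σ : Set (ℕ × ℕ)} {x y : X} :
    y ∈ BsetOne G A σ x ↔
      ∀ l, ((∃ g ∈ Vb G σ, g • x ∈ A l) ↔ ∃ g ∈ Vc G (prng σ), g⁻¹ • y ∈ A l) := by
  unfold BsetOne
  simp only [Set.mem_inter_iff, Set.mem_iInter, Set.mem_compl_iff]
  constructor
  · rintro ⟨h1, h2⟩ l
    constructor
    · intro hp; exact mem_setSmul.mp (h1 l (setOrb_inter_nonempty.mpr hp))
    · intro hq
      by_contra hp
      have he : setOrb G (Vb G σ) x ∩ A l = ∅ :=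
        Set.not_nonempty_iff_eq_empty.mp fun hne => hp (setOrb_inter_nonempty.mp hne)
      exact h2 l he (mem_setSmul.mpr hq)
  · intro h
    refine ⟨fun l hne => mem_setSmul.mpr ((h l).mp (setOrb_inter_nonempty.mp hne)),
      fun l he hy => ?_⟩
    have hne : (setOrb G (Vb G σ) x ∩ A l).Nonempty :=
      setOrb_inter_nonempty.mpr ((h l).mpr (mem_setSmul.mp hy))
    rw [he] at hne
    exact Set.not_nonempty_empty hne

lemma mem_BsetSucc {prev : Set (ℕ × ℕ) → X → Set X} {σ : Set (ℕ × ℕ)} {x y : X} :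
    y ∈ BsetSucc G prev σ x ↔
      (∀ b : Finset ℕ, pdom σ ⊆ ↑b →
        ∃ σ', σ' ∈ SGfin G ∧ σ ⊆ σ' ∧ pdom σ' = ↑b ∧ y ∈ prev σ' x) ∧
      (∀ a : Finset ℕ, prng σ ⊆ ↑a →
        ∃ σ', σ' ∈ SGfin G ∧ σ ⊆ σ' ∧ prng σ' = ↑a ∧ y ∈ prev σ' x) := by
  simp only [BsetSucc, Set.mem_inter_iff, Set.mem_iInter, Set.mem_iUnion, exists_prop]

lemma Bset_one (A : ℕ → Set X) : Bset G A 1 = BsetOne G A := by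
  rw [show (1 : Ordinal.{0}) = Order.succ 0 from (Ordinal.succ_zero).symm]
  unfold Bset
  rw [Ordinal.limitRecOn_succ]
  simp only [if_pos rfl, if_true]

lemma Bset_succ (A : ℕ → Set X) {o : Ordinal.{0}} (h : o ≠ 0) :
    Bset G A (Order.succ o) = BsetSucc G (Bset G A o) := by
  unfold Bset
  rw [Ordinal.limitRecOn_succ]
  simp [h]

lemma mem_Bset_limit (A : ℕ → Set X) {o : Ordinal.{0}} (h : Order.IsSuccLimit o)
    {σ : Set (ℕ × ℕ)} {x y : X} :
    y ∈ Bset G A o σ x ↔ ∀ β : Ordinal.{0}, β < o → 1 ≤ β → y ∈ Bset G A β σ x := by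
  unfold Bset
  rw [Ordinal.limitRecOn_limit _ _ _ _ h]
  simp only [Set.mem_iInter]

end AlphaAux2


section AlphaAux3

variable {G : Subgroup Sinf} {X : Type*} [TopologicalSpace X] [MulAction G X]
  [ContinuousSMul G X] {A : ℕ → Set X}

lemma Sg_mul_apply (g h : G) (k : ℕ) :
    ((g * h : G) : Sinf) k = (g : Sinf) ((h : Sinf) k) := rfl

lemma Sg_inv_apply (g : G) (k : ℕ) : ((g⁻¹ : G) : Sinf) k = (g : Sinf)⁻¹ k := rfl

lemma baseS (hbasis : TopologicalSpace.IsTopologicalBasis (Set.range A))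
    {σ : Set (ℕ × ℕ)} (hσ : σ ∈ SGfin G) {x y : X}
    (hyp : y ∈ BsetOne G A σ x) : x ∈ BsetOne G A (pinv σ) y := by
  rw [mem_BsetOne] at hyp ⊢
  intro l
  rw [prng_pinv]
  constructor
  · rintro ⟨g, hg, hgy⟩
    have hyA : y ∈ g⁻¹ • A l := Set.mem_smul_set_iff_inv_smul_mem.mpr (by simpa using hgy)
    obtain ⟨v, ⟨l', rfl⟩, hyv, hsub⟩ :=
      hbasis.exists_subset_of_mem_open hyA ((hbasis.isOpen ⟨l, rfl⟩).smul g⁻¹)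
    obtain ⟨h, hh, hhx⟩ := (hyp l').mpr ⟨1, one_mem_Vc _, by simpa using hyv⟩
    refine ⟨h⁻¹ * g⁻¹, ?_, ?_⟩
    · intro k hk
      obtain ⟨m, hkm⟩ := mem_pdom.mp hk
      have h1 : (h : Sinf) k = m := hh (k, m) hkm
      have h2 : (g : Sinf) m = k := hg (m, k) hkm
      show ((h⁻¹ * g⁻¹ : G) : Sinf) k = k
      rw [Sg_mul_apply, Sg_inv_apply, Sg_inv_apply, perm_inv_apply h2, perm_inv_apply h1]
    · have hmem : h • x ∈ g⁻¹ • A l := hsub hhx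
      have := Set.mem_smul_set_iff_inv_smul_mem.mp hmem
      simpa [mul_smul] using this
  · rintro ⟨k, hk, hkx⟩
    obtain ⟨g₀, hg₀⟩ := Vb_nonempty hσ
    have hx : g₀ • x ∈ (g₀ * k) • A l := by
      rw [Set.mem_smul_set_iff_inv_smul_mem]
      simpa [mul_smul] using hkx
    obtain ⟨v, ⟨l', rfl⟩, hyv, hsub⟩ :=
      hbasis.exists_subset_of_mem_open hx ((hbasis.isOpen ⟨l, rfl⟩).smul (g₀ * k))
    obtain ⟨u, hu, huy⟩ := (hyp l').mp ⟨g₀, hg₀, hyv⟩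
    refine ⟨(u * (g₀ * k))⁻¹, ?_, ?_⟩
    · rintro ⟨n, m⟩ hnm
      have h1 : (g₀ : Sinf) m = n := hg₀ (m, n) hnm
      have h2 : (u : Sinf) n = n := hu n (mem_prng.mpr ⟨m, hnm⟩)
      have h3 : (k : Sinf) m = m := hk m (mem_pdom.mpr ⟨n, hnm⟩)
      show (((u * (g₀ * k))⁻¹ : G) : Sinf) n = m
      rw [Sg_inv_apply]
      exact perm_inv_apply (by rw [Sg_mul_apply, Sg_mul_apply, h3, h1, h2])
    · have hmem : u⁻¹ • y ∈ (g₀ * k) • A l := hsub huy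
      have := Set.mem_smul_set_iff_inv_smul_mem.mp hmem
      simpa [mul_smul] using this

lemma baseT (hbasis : TopologicalSpace.IsTopologicalBasis (Set.range A))
    {σ τ : Set (ℕ × ℕ)} (hσ : σ ∈ SGfin G) (hτ : τ ∈ SGfin G)
    (hdr : pdom τ = prng σ) {x y z : X}
    (h1 : y ∈ BsetOne G A σ x) (h2 : z ∈ BsetOne G A τ y) :
    z ∈ BsetOne G A (pcomp τ σ) x := by
  rw [mem_BsetOne] at h1 h2 ⊢
  intro l
  rw [prng_pcomp hdr.symm, ← h2 l]
  constructor
  · rintro ⟨g, hg, hgx⟩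
    obtain ⟨s₀, hs₀⟩ := Vb_nonempty hσ
    have hx : s₀ • x ∈ (s₀ * g⁻¹) • A l := by
      rw [Set.mem_smul_set_iff_inv_smul_mem]
      simpa [mul_smul] using hgx
    obtain ⟨v, ⟨l', rfl⟩, hyv, hsub⟩ :=
      hbasis.exists_subset_of_mem_open hx ((hbasis.isOpen ⟨l, rfl⟩).smul _)
    obtain ⟨u, hu, huy⟩ := (h1 l').mp ⟨s₀, hs₀, hyv⟩
    refine ⟨(u * (s₀ * g⁻¹))⁻¹, ?_, ?_⟩
    · rintro ⟨j, m⟩ hjm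
      have hj : j ∈ prng σ := hdr ▸ mem_pdom.mpr ⟨m, hjm⟩
      obtain ⟨k, hkj⟩ := mem_prng.mp hj
      have hgk : (g : Sinf) k = m := hg (k, m) ⟨j, hkj, hjm⟩
      have hsk : (s₀ : Sinf) k = j := hs₀ (k, j) hkj
      have huj : (u : Sinf) j = j := hu j hj
      show (((u * (s₀ * g⁻¹))⁻¹ : G) : Sinf) j = m
      rw [Sg_inv_apply]
      exact perm_inv_apply
        (by rw [Sg_mul_apply, Sg_mul_apply, Sg_inv_apply, perm_inv_apply hgk, hsk, huj])
    · have hmem : u⁻¹ • y ∈ (s₀ * g⁻¹) • A l := hsub huy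
      have := Set.mem_smul_set_iff_inv_smul_mem.mp hmem
      simpa [mul_smul] using this
  · rintro ⟨h, hh, hhy⟩
    have hy : y ∈ h⁻¹ • A l := Set.mem_smul_set_iff_inv_smul_mem.mpr (by simpa using hhy)
    obtain ⟨v, ⟨l', rfl⟩, hyv, hsub⟩ :=
      hbasis.exists_subset_of_mem_open hy ((hbasis.isOpen ⟨l, rfl⟩).smul _)
    obtain ⟨s, hs, hsx⟩ := (h1 l').mpr ⟨1, one_mem_Vc _, by simpa using hyv⟩
    refine ⟨h * s, ?_, ?_⟩
    · rintro ⟨k, m⟩ ⟨j, hkj, hjm⟩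
      have e1 : (s : Sinf) k = j := hs (k, j) hkj
      have e2 : (h : Sinf) j = m := hh (j, m) hjm
      show ((h * s : G) : Sinf) k = m
      rw [Sg_mul_apply, e1, e2]
    · have hmem : s • x ∈ h⁻¹ • A l := hsub hsx
      have := Set.mem_smul_set_iff_inv_smul_mem.mp hmem
      simpa [mul_smul] using this

end AlphaAux3


section AlphaAux4

variable {G : Subgroup Sinf} {X : Type*} [TopologicalSpace X] [MulAction G X]
  [ContinuousSMul G X] {A : ℕ → Set X}

/-- Symmetry and transitivity of the relation `y ∈ B_α(x, σ)`, by transfinite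
induction on `α ≥ 1`. -/
lemma Bset_symm_trans (hbasis : TopologicalSpace.IsTopologicalBasis (Set.range A))
    (α : Ordinal.{0}) (hα : 1 ≤ α) :
    (∀ (x y : X) (σ : Set (ℕ × ℕ)), σ ∈ SGfin G →
        y ∈ Bset G A α σ x → x ∈ Bset G A α (pinv σ) y) ∧
    (∀ (x y z : X) (σ τ : Set (ℕ × ℕ)), σ ∈ SGfin G → τ ∈ SGfin G →
        pdom τ = prng σ → y ∈ Bset G A α σ x → z ∈ Bset G A α τ y →
        z ∈ Bset G A α (pcomp τ σ) x) := by
  induction α using Ordinal.induction with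
  | _ α IH =>
  rcases Ordinal.zero_or_succ_or_isSuccLimit α with h0 | ⟨β, rfl⟩ | hlim
  · subst h0; exact absurd hα (by simp)
  · rcases eq_or_ne β 0 with rfl | hβ0
    · -- α = 1 : base case
      rw [show Order.succ (0 : Ordinal.{0}) = 1 from Ordinal.succ_zero, Bset_one]
      exact ⟨fun x y σ hσ hy => baseS hbasis hσ hy,
        fun x y z σ τ hσ hτ hdr hy hz => baseT hbasis hσ hτ hdr hy hz⟩
    · -- successor case
      have hβ1 : 1 ≤ β := Ordinal.one_le_iff_ne_zero.mpr hβ0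
      obtain ⟨IHS, IHT⟩ := IH β (Order.lt_succ β) hβ1
      rw [Bset_succ A hβ0]
      constructor
      · intro x y σ hσ hy
        rw [mem_BsetSucc] at hy ⊢
        obtain ⟨hyd, hyr⟩ := hy
        constructor
        · intro b hb
          rw [pdom_pinv] at hb
          obtain ⟨σ', hσ', hsub, hrng, hmem⟩ := hyr b hb
          exact ⟨pinv σ', pinv_SGfin hσ', pinv_mono hsub,
            by rw [pdom_pinv, hrng], IHS _ _ _ hσ' hmem⟩
        · intro a ha
          rw [prng_pinv] at ha
          obtain ⟨σ', hσ', hsub, hdom, hmem⟩ := hyd a ha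
          exact ⟨pinv σ', pinv_SGfin hσ', pinv_mono hsub,
            by rw [prng_pinv, hdom], IHS _ _ _ hσ' hmem⟩
      · intro x y z σ τ hσ hτ hdr h1 h2
        rw [mem_BsetSucc] at h1 h2 ⊢
        constructor
        · intro b hb
          rw [pdom_pcomp hdr.symm] at hb
          obtain ⟨σ', hσ', hs1, hd1, hm1⟩ := h1.1 b hb
          obtain ⟨a, ha⟩ := SGfin.finrng hσ'
          have hτa : pdom τ ⊆ ↑a := by
            rw [← ha]; rw [hdr]; exact prng_mono hs1
          obtain ⟨τ', hτ', ht1, hd2, hm2⟩ := h2.1 a hτa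
          have hda : pdom τ' = prng σ' := by rw [hd2, ha]
          refine ⟨pcomp τ' σ', pcomp_SGfin hσ' hτ', pcomp_mono hs1 ht1, ?_,
            IHT _ _ _ _ _ hσ' hτ' hda hm1 hm2⟩
          rw [pdom_pcomp hda.symm, hd1]
        · intro a ha
          rw [prng_pcomp hdr.symm] at ha
          obtain ⟨τ', hτ', ht1, hr1, hm2⟩ := h2.2 a ha
          obtain ⟨b, hb⟩ := SGfin.finrng (pinv_SGfin hτ')
          rw [prng_pinv] at hb
          have hσb : prng σ ⊆ ↑b := by
            rw [← hb, ← hdr]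
            intro k hk
            obtain ⟨m, hm⟩ := mem_pdom.mp hk
            exact mem_pdom.mpr ⟨m, ht1 hm⟩
          obtain ⟨σ', hσ', hs1, hr2, hm1⟩ := h1.2 b hσb
          have hda : pdom τ' = prng σ' := by rw [hb, hr2]
          refine ⟨pcomp τ' σ', pcomp_SGfin hσ' hτ', pcomp_mono hs1 ht1, ?_,
            IHT _ _ _ _ _ hσ' hτ' hda hm1 hm2⟩
          rw [prng_pcomp hda.symm, hr1]
  · -- limit case
    constructor
    · intro x y σ hσ hy
      rw [mem_Bset_limit A hlim] at hy ⊢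
      intro β hβ hβ1
      exact (IH β hβ hβ1).1 _ _ _ hσ (hy β hβ hβ1)
    · intro x y z σ τ hσ hτ hdr h1 h2
      rw [mem_Bset_limit A hlim] at h1 h2 ⊢
      intro β hβ hβ1
      exact (IH β hβ hβ1).2 _ _ _ _ _ hσ hτ hdr (h1 β hβ hβ1) (h2 β hβ hβ1)

/-- Part (a): if `y ∈ B_α(x, σ)` then `B_α(y, id_c) = B_α(x, σ)` where `c = rng σ`. -/
lemma Bset_part_a (hbasis : TopologicalSpace.IsTopologicalBasis (Set.range A))
    {α : Ordinal.{0}} (hα : 1 ≤ α) {σ : Set (ℕ × ℕ)} (hσ : σ ∈ SGfin G) {x y : X}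
    (hy : y ∈ Bset G A α σ x) :
    Bset G A α (idb (prng σ)) y = Bset G A α σ x := by
  obtain ⟨S, T⟩ := Bset_symm_trans (G := G) hbasis α hα
  obtain ⟨fs, hfs⟩ := SGfin.finrng hσ
  have hid : idb (prng σ) ∈ SGfin G := by rw [hfs]; exact idb_SGfin fs
  apply Set.Subset.antisymm
  · intro z hz
    have hz' := T x y z σ (idb (prng σ)) hσ hid (pdom_idb _) hy hz
    rwa [pcomp_idb_left subset_rfl] at hz'
  · intro z hz
    have hx : x ∈ Bset G A α (pinv σ) y := S x y σ hσ hy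
    have hz' := T y x z (pinv σ) σ (pinv_SGfin hσ) hσ (prng_pinv σ).symm hx hz
    rwa [pcomp_pinv_self hσ] at hz'

end AlphaAux4

/-- α-sets form a partition. -/
theorem alphaSet_partition
    (G : Subgroup Sinf) (hGclosed : IsClosed (G : Set Sinf))
    {X : Type*} [TopologicalSpace X] [PolishSpace X] [MulAction G X] [ContinuousSMul G X]
    (A : ℕ → Set X) (hbasis : TopologicalSpace.IsTopologicalBasis (Set.range A))
    (hbasisInv : ∀ l, ∃ c : Finset ℕ, ∀ g ∈ Vc G (↑c : Set ℕ), g • A l = A l)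
    (x y : X) (σ δ : Set (ℕ × ℕ)) (hσ : σ ∈ SGfin G) (hδ : δ ∈ SGfin G)
    (c : Set ℕ) (hc : prng σ = c) (hc' : prng δ = c)
    (α : Ordinal.{0}) (hα : 1 ≤ α) (hαc : α.card ≤ Cardinal.aleph0) :
    (y ∈ Bset G A α σ x → Bset G A α (idb c) y = Bset G A α σ x) ∧
    (Bset G A α σ x = Bset G A α δ y ∨ Bset G A α σ x ∩ Bset G A α δ y = ∅) := by
  subst hc
  constructor
  · intro hy
    exact Bset_part_a hbasis hα hσ hy
  · rcases Set.eq_empty_or_nonempty (Bset G A α σ x ∩ Bset G A α δ y) with he | ⟨w, hw1, hw2⟩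
    · exact Or.inr he
    · refine Or.inl ?_
      have e1 := Bset_part_a hbasis hα hσ hw1
      have e2 := Bset_part_a hbasis hα hδ hw2
      rw [hc'] at e2
      rw [← e1, ← e2]
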